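/- Let G be a trivalent graph with first Betti number at most 1. Then the graded semigroup τ(G) is generated by its elements of degree 1 and degree 2. (For a trivalent tree, degree 1 alone suffices.) -/

import Mathlib

set_option linter.unusedSectionVars false
set_option linter.unusedVariables false
set_option maxHeartbeats 1000000


/-!
Common setup: finite (multi)graphs with ordered boundary maps `fst`, `snd`
(the boundary is morally unordered; loops and multiple edges are allowed).
-/

structure TGraph where
  V : Type
  E : Type
  [fintV : Fintype V]
  [fintE : Fintype E]
  [decV : DecidableEq V]
  [decE : DecidableEq E]
  fst : E → V
  snd : E → V

namespace TGraph

variable (G : TGraph)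

instance : Fintype G.V := G.fintV
instance : Fintype G.E := G.fintE
instance : DecidableEq G.V := G.decV
instance : DecidableEq G.E := G.decE

/-- Number of endpoints of `e` equal to `v` (a loop counts twice). -/
def mult (v : G.V) (e : G.E) : ℕ :=
  (if G.fst e = v then 1 else 0) + (if G.snd e = v then 1 else 0)

/-- Valency of a vertex (a loop contributes two). -/
def degree (v : G.V) : ℕ := ∑ e, G.mult v e

/-- A leaf is a vertex incident to exactly one edge (valency one). -/
def IsLeaf (v : G.V) : Prop := G.degree v = 1

instance : DecidablePred G.IsLeaf := fun v => inferInstanceAs (Decidable (G.degree v = 1))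

/-- A graph is trivalent when every non-leaf vertex has valency three. -/
def Trivalent : Prop := ∀ v, G.degree v = 1 ∨ G.degree v = 3

/-- The number of leaves. -/
def numLeaves : ℕ := Fintype.card {v : G.V // G.IsLeaf v}

/-- The number of inner (non-leaf) vertices. -/
def numInner : ℕ := Fintype.card {v : G.V // ¬ G.IsLeaf v}

/-- The number of connected components. -/
noncomputable def components : ℕ :=
  Nat.card (Quot fun v w : G.V =>
    ∃ e, (G.fst e = v ∧ G.snd e = w) ∨ (G.fst e = w ∧ G.snd e = v))

/-- The first Betti number, computed via the Euler characteristic: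
`g = |E| - |V| + c`. -/
noncomputable def betti : ℤ := (Fintype.card G.E : ℤ) - Fintype.card G.V + G.components

/-- The value of the vertex functional `v = Σ_{e ∋ v} e*` on an edge labeling. -/
def vsum (v : G.V) (u : G.E → ℤ) : ℤ := ∑ e, (G.mult v e : ℤ) * u e

/-- Membership in the graded lattice `M^gr = ℤ ⊕ M`: the edge labeling has even
sum at every inner vertex. -/
def InMgr (ω : ℤ × (G.E → ℤ)) : Prop :=
  ∀ v, ¬ G.IsLeaf v → Even (G.vsum v ω.2)

/-- Membership in the graded cone `τ(G) ⊂ ℤ ⊕ M`: nonnegative degree and edge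
values, parity at inner vertices, the triangle inequalities at every inner
vertex (encoded as: twice each incident value is at most the local sum), and
the degree bound `deg ω ≥ deg_v ω` at every inner vertex. -/
def InCone (ω : ℤ × (G.E → ℤ)) : Prop :=
  0 ≤ ω.1 ∧ (∀ e, 0 ≤ ω.2 e) ∧
  ∀ v, ¬ G.IsLeaf v →
    Even (G.vsum v ω.2) ∧
    (∀ e, G.mult v e ≠ 0 → 2 * ω.2 e ≤ G.vsum v ω.2) ∧
    G.vsum v ω.2 ≤ 2 * ω.1

/-- A network: a 0-1 edge labeling with even local sum at every inner vertex.
For trivalent graphs this is exactly a disjoint union of leaf-to-leaf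
edge-paths and cycles. -/
def IsNetwork (u : G.E → ℤ) : Prop :=
  (∀ e, u e = 0 ∨ u e = 1) ∧ ∀ v, ¬ G.IsLeaf v → Even (G.vsum v u)

end TGraph

section Conn
variable {V : Type} [Fintype V] [DecidableEq V] {E : Type} [Fintype E] [DecidableEq E]
variable (fst snd : E → V)

/-- adjacency relation generated by edges in `A`. -/
def relA (A : Finset E) : V → V → Prop :=
  fun v w => ∃ e ∈ A, (fst e = v ∧ snd e = w) ∨ (fst e = w ∧ snd e = v)

noncomputable def cA (A : Finset E) : ℕ := Nat.card (Quot (relA fst snd A))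

lemma relA_mono {A B : Finset E} (h : A ⊆ B) {v w : V} (hr : relA fst snd A v w) :
    relA fst snd B v w := by
  obtain ⟨e, he, h2⟩ := hr; exact ⟨e, h he, h2⟩

/-- the canonical surjection between quotients. -/
noncomputable def qmap {A B : Finset E} (h : A ⊆ B) :
    Quot (relA fst snd A) → Quot (relA fst snd B) :=
  Quot.map id (fun v w hr => relA_mono fst snd h hr)

lemma qmap_mk {A B : Finset E} (h : A ⊆ B) (v : V) :
    qmap fst snd h (Quot.mk _ v) = Quot.mk _ v := rfl

lemma qmap_surj {A B : Finset E} (h : A ⊆ B) : Function.Surjective (qmap fst snd h) := by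
  intro c; induction c using Quot.ind with
  | _ v => exact ⟨Quot.mk _ v, rfl⟩

instance quotFinite (A : Finset E) : Finite (Quot (relA fst snd A)) :=
  Finite.of_surjective (Quot.mk _) (Quot.mk_surjective)

/-- L1: monotone -/
lemma cA_anti {A B : Finset E} (h : A ⊆ B) : cA fst snd B ≤ cA fst snd A :=
  Nat.card_le_card_of_surjective _ (qmap_surj fst snd h)

lemma relA_empty (v w : V) : ¬ relA fst snd (∅ : Finset E) v w := by
  rintro ⟨e, he, -⟩; exact absurd he (Finset.notMem_empty e)

/-- L3 -/
lemma cA_empty : cA fst snd (∅ : Finset E) = Fintype.card V := by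
  have hinj : Function.Injective (Quot.mk (relA fst snd (∅ : Finset E))) := by
    intro a b hab
    rw [Quot.eq] at hab
    induction hab with
    | rel x y h => exact absurd h (relA_empty fst snd x y)
    | refl x => rfl
    | symm x y _ ih => exact ih.symm
    | trans x y z _ _ ih1 ih2 => exact ih1.trans ih2
  have := Nat.card_eq_fintype_card (α := V)
  rw [cA, ← this]
  exact (Nat.card_eq_of_bijective (Quot.mk (relA fst snd ∅)) ⟨hinj, Quot.mk_surjective⟩).symm

/-- key structure lemma for adding one edge `e` -/
lemma eqvGen_insert {A : Finset E} {e : E} {u v : V}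
    (h : Relation.EqvGen (relA fst snd (insert e A)) u v) :
    Relation.EqvGen (relA fst snd A) u v ∨
      ((Relation.EqvGen (relA fst snd A) u (fst e) ∨ Relation.EqvGen (relA fst snd A) u (snd e)) ∧
       (Relation.EqvGen (relA fst snd A) v (fst e) ∨ Relation.EqvGen (relA fst snd A) v (snd e))) := by
  induction h with
  | rel x y hxy =>
    obtain ⟨f, hf, hor⟩ := hxy
    rcases Finset.mem_insert.mp hf with rfl | hfA
    · right
      rcases hor with ⟨h1, h2⟩ | ⟨h1, h2⟩
      · exact ⟨Or.inl (h1 ▸ Relation.EqvGen.refl _), Or.inr (h2 ▸ Relation.EqvGen.refl _)⟩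
      · exact ⟨Or.inr (h2 ▸ Relation.EqvGen.refl _), Or.inl (h1 ▸ Relation.EqvGen.refl _)⟩
    · exact Or.inl (Relation.EqvGen.rel _ _ ⟨f, hfA, hor⟩)
  | refl x => exact Or.inl (Relation.EqvGen.refl x)
  | symm x y _ ih =>
    rcases ih with h | ⟨h1, h2⟩
    · exact Or.inl h.symm
    · exact Or.inr ⟨h2, h1⟩
  | trans x y z _ _ ih1 ih2 =>
    rcases ih1 with h1 | ⟨ha, hb⟩
    · rcases ih2 with h2 | ⟨hc, hd⟩
      · exact Or.inl (h1.trans _ _ _ h2)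
      · exact Or.inr ⟨hc.imp (h1.trans _ _ _) (h1.trans _ _ _), hd⟩
    · rcases ih2 with h2 | ⟨hc, hd⟩
      · refine Or.inr ⟨ha, hb.imp (fun hh => ?_) (fun hh => ?_)⟩
        · exact Relation.EqvGen.trans _ _ _ (Relation.EqvGen.symm _ _ h2) hh
        · exact Relation.EqvGen.trans _ _ _ (Relation.EqvGen.symm _ _ h2) hh
      · exact Or.inr ⟨ha, hd⟩
  

lemma qmap_pair {A : Finset E} {e : E} (he : e ∈ A) :
    Quot.mk (relA fst snd A) (fst e) = Quot.mk (relA fst snd A) (snd e) :=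
  Quot.sound ⟨e, he, Or.inl ⟨rfl, rfl⟩⟩

lemma merge_analysis {A : Finset E} {e : E} {c₁ c₂ : Quot (relA fst snd A)}
    (h : qmap fst snd (Finset.subset_insert e A) c₁ = qmap fst snd (Finset.subset_insert e A) c₂) :
    c₁ = c₂ ∨ ((c₁ = Quot.mk _ (fst e) ∨ c₁ = Quot.mk _ (snd e)) ∧
               (c₂ = Quot.mk _ (fst e) ∨ c₂ = Quot.mk _ (snd e))) := by
  induction c₁ using Quot.ind with
  | _ u =>
  induction c₂ using Quot.ind with
  | _ v =>
  rw [qmap_mk, qmap_mk, Quot.eq] at h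
  rcases eqvGen_insert fst snd h with h | ⟨h1, h2⟩
  · exact Or.inl (Quot.eq.mpr h)
  · exact Or.inr ⟨h1.imp Quot.eq.mpr Quot.eq.mpr, h2.imp Quot.eq.mpr Quot.eq.mpr⟩

/-- L2 -/
lemma cA_le_insert (A : Finset E) (e : E) : cA fst snd A ≤ cA fst snd (insert e A) + 1 := by
  classical
  haveI : Finite (Quot (relA fst snd A)) := quotFinite fst snd A
  haveI : Finite (Quot (relA fst snd (insert e A))) := quotFinite fst snd _
  set qs := Quot.mk (relA fst snd A) (snd e) with hqs
  have h1 : cA fst snd A ≤ Nat.card {c : Quot (relA fst snd A) // c ≠ qs} + 1 := by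
    have hinj : Function.Injective
        (fun c : Quot (relA fst snd A) =>
          if h : c = qs then (none : Option {c : Quot (relA fst snd A) // c ≠ qs})
          else some ⟨c, h⟩) := by
      intro a b hab
      by_cases ha : a = qs
      · by_cases hb : b = qs
        · rw [ha, hb]
        · simp [ha, hb] at hab
      · by_cases hb : b = qs
        · simp [ha, hb] at hab
        · simp [ha, hb] at hab; exact hab
    letI : Fintype (Quot (relA fst snd A)) := Fintype.ofFinite _
    haveI : Finite {c : Quot (relA fst snd A) // c ≠ qs} := Subtype.finite
    letI : Fintype {c : Quot (relA fst snd A) // c ≠ qs} := Fintype.ofFinite _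
    have hle := Fintype.card_le_of_injective _ hinj
    rw [Fintype.card_option] at hle
    rw [cA, Nat.card_eq_fintype_card, Nat.card_eq_fintype_card]
    exact hle
  have h2 : Nat.card {c : Quot (relA fst snd A) // c ≠ qs} ≤ cA fst snd (insert e A) := by
    have hinj : Function.Injective
        (fun c : {c : Quot (relA fst snd A) // c ≠ qs} =>
          qmap fst snd (Finset.subset_insert e A) c.1) := by
      rintro ⟨a, ha⟩ ⟨b, hb⟩ hab
      simp only at hab
      rcases merge_analysis fst snd hab with h | ⟨hx, hy⟩
      · exact Subtype.ext h
      · rcases hx with hx | hx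
        · rcases hy with hy | hy
          · exact Subtype.ext (hx.trans hy.symm)
          · exact absurd hy hb
        · exact absurd hx ha
    exact Nat.card_le_card_of_injective _ hinj
  omega

/-- L8a -/
lemma cA_insert_of_rel {A : Finset E} {e : E}
    (h : Relation.EqvGen (relA fst snd A) (fst e) (snd e)) :
    cA fst snd (insert e A) = cA fst snd A := by
  have hbij : Function.Bijective (qmap fst snd (Finset.subset_insert e A)) := by
    constructor
    · intro a b hab
      rcases merge_analysis fst snd hab with h' | ⟨hx, hy⟩
      · exact h'
      · have : Quot.mk (relA fst snd A) (fst e) = Quot.mk (relA fst snd A) (snd e) :=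
          Quot.eq.mpr h
        rcases hx with hx | hx <;> rcases hy with hy | hy <;>
          first
            | exact hx.trans hy.symm
            | exact hx.trans (this ▸ hy.symm)
            | exact hx.trans (this.symm ▸ hy.symm)
            | { rw [hx, hy] }
            | { rw [hx, hy, this] }
            | { rw [hx, hy, ← this] }
    · exact qmap_surj fst snd _
  exact (Nat.card_eq_of_bijective _ hbij).symm

/-- L8b -/
lemma cA_insert_of_not_rel {A : Finset E} {e : E}
    (h : ¬ Relation.EqvGen (relA fst snd A) (fst e) (snd e)) :
    cA fst snd A = cA fst snd (insert e A) + 1 := by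
  classical
  have hle := cA_le_insert fst snd A e
  have hge := cA_anti fst snd (Finset.subset_insert e A)
  have hne : cA fst snd (insert e A) ≠ cA fst snd A := by
    intro hcard
    letI : Fintype (Quot (relA fst snd A)) := Fintype.ofFinite _
    letI : Fintype (Quot (relA fst snd (insert e A))) := Fintype.ofFinite _
    have hcard' : Fintype.card (Quot (relA fst snd A)) =
        Fintype.card (Quot (relA fst snd (insert e A))) := by
      rw [← Nat.card_eq_fintype_card, ← Nat.card_eq_fintype_card]
      exact hcard.symm
    have hbij := (Fintype.bijective_iff_surjective_and_card
      (qmap fst snd (Finset.subset_insert e A))).mpr ⟨qmap_surj fst snd _, hcard'⟩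
    have h1 : qmap fst snd (Finset.subset_insert e A) (Quot.mk _ (fst e)) =
        qmap fst snd (Finset.subset_insert e A) (Quot.mk _ (snd e)) := by
      rw [qmap_mk, qmap_mk]
      exact qmap_pair fst snd (Finset.mem_insert_self e A)
    have := hbij.1 h1
    rw [Quot.eq] at this
    exact h this
  omega

/-- L4 -/
lemma partition_rigid {A B : Finset E} (hAB : A ⊆ B) (hcard : cA fst snd B = cA fst snd A)
    {u v : V} :
    Relation.EqvGen (relA fst snd A) u v ↔ Relation.EqvGen (relA fst snd B) u v := by
  classical
  letI : Fintype (Quot (relA fst snd A)) := Fintype.ofFinite _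
  letI : Fintype (Quot (relA fst snd B)) := Fintype.ofFinite _
  have hcard' : Fintype.card (Quot (relA fst snd A)) = Fintype.card (Quot (relA fst snd B)) := by
    rw [← Nat.card_eq_fintype_card, ← Nat.card_eq_fintype_card]
    exact hcard.symm
  have hbij := (Fintype.bijective_iff_surjective_and_card
    (qmap fst snd hAB)).mpr ⟨qmap_surj fst snd _, hcard'⟩
  constructor
  · intro h
    exact Quot.eq.mp (by
      have : Quot.mk (relA fst snd A) u = Quot.mk (relA fst snd A) v := Quot.eq.mpr h
      have := congrArg (qmap fst snd hAB) this
      rwa [qmap_mk, qmap_mk] at this)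
  · intro h
    have : qmap fst snd hAB (Quot.mk _ u) = qmap fst snd hAB (Quot.mk _ v) := by
      rw [qmap_mk, qmap_mk]; exact Quot.eq.mpr h
    have := hbij.1 this
    exact Quot.eq.mp this

/-- the relative first Betti number -/
noncomputable def bA (A : Finset E) : ℤ := (A.card : ℤ) + cA fst snd A - Fintype.card V

/-- L5 -/
lemma bA_mono : ∀ (B A : Finset E), A ⊆ B → bA fst snd A ≤ bA fst snd B := by
  intro B
  induction B using Finset.strongInduction with
  | _ B ih =>
    intro A hAB
    rcases eq_or_ssubset_of_subset hAB with rfl | hss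
    · exact le_rfl
    · obtain ⟨e, heB, heA⟩ := Finset.exists_of_ssubset hss
      have hsub : A ⊆ B.erase e := fun x hx =>
        Finset.mem_erase.mpr ⟨fun h => heA (h ▸ hx), hAB hx⟩
      have h1 : bA fst snd A ≤ bA fst snd (B.erase e) :=
        ih (B.erase e) (Finset.erase_ssubset heB) A hsub
      have h2 : bA fst snd (B.erase e) ≤ bA fst snd B := by
        have hB : B = insert e (B.erase e) := (Finset.insert_erase heB).symm
        have hc := cA_le_insert fst snd (B.erase e) e
        rw [← hB] at hc
        have hcard : (B.erase e).card + 1 = B.card := Finset.card_erase_add_one heB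
        rw [bA, bA]
        omega
      exact h1.trans h2

/-- L6 -/
lemma bA_nonneg (A : Finset E) : 0 ≤ bA fst snd A := by
  have h := bA_mono fst snd A ∅ (Finset.empty_subset A)
  have : bA fst snd (∅ : Finset E) = 0 := by
    rw [bA, cA_empty, Finset.card_empty]; ring
  omega

/-- L7 : existence of a non-bridge when betti ≥ 1 -/
lemma exists_nonbridge : ∀ (A : Finset E), 1 ≤ bA fst snd A →
    ∃ e ∈ A, cA fst snd (A.erase e) = cA fst snd A := by
  intro A
  induction A using Finset.strongInduction with
  | _ A ih =>
    intro hb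
    have hAne : A.Nonempty := by
      rcases A.eq_empty_or_nonempty with rfl | h
      · exfalso
        have : bA fst snd (∅ : Finset E) = 0 := by
          rw [bA, cA_empty, Finset.card_empty]; ring
        omega
      · exact h
    obtain ⟨e, heA⟩ := hAne
    by_cases hbridge : cA fst snd (A.erase e) = cA fst snd A
    · exact ⟨e, heA, hbridge⟩
    · -- e is a bridge
      have hA : A = insert e (A.erase e) := (Finset.insert_erase heA).symm
      have hδ : ¬ Relation.EqvGen (relA fst snd (A.erase e)) (fst e) (snd e) := by
        intro hrel
        have := cA_insert_of_rel fst snd hrel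
        rw [← hA] at this
        exact hbridge this.symm
      have hstep : cA fst snd (A.erase e) = cA fst snd A + 1 := by
        have := cA_insert_of_not_rel fst snd hδ
        rw [← hA] at this
        omega
      have hb' : 1 ≤ bA fst snd (A.erase e) := by
        rw [bA] at hb ⊢
        have hcard : A.card = (A.erase e).card + 1 := by
          rw [hA, Finset.card_insert_of_notMem (Finset.notMem_erase e A), ← hA]
        omega
      obtain ⟨f, hf, hnb⟩ := ih (A.erase e) (Finset.erase_ssubset heA) hb'
      have hfe : f ≠ e := (Finset.mem_erase.mp hf).1
      have hfA : f ∈ A := (Finset.mem_erase.mp hf).2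
      refine ⟨f, hfA, ?_⟩
      -- A.erase f = insert e ((A.erase e).erase f)
      have hAf : A.erase f = insert e ((A.erase e).erase f) := by
        have hmem : e ∈ A.erase f := Finset.mem_erase.mpr ⟨fun h => hfe h.symm, heA⟩
        rw [Finset.erase_right_comm]
        exact (Finset.insert_erase hmem).symm
      have hδ' : ¬ Relation.EqvGen (relA fst snd ((A.erase e).erase f)) (fst e) (snd e) := by
        intro hrel
        exact hδ ((partition_rigid fst snd (Finset.erase_subset f (A.erase e)) hnb.symm).mp hrel)
      have := cA_insert_of_not_rel fst snd hδ'
      rw [← hAf] at this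
      omega

end Conn

namespace TGraph

variable (H : TGraph)

def dA (A : Finset H.E) (v : H.V) : ℕ := ∑ e ∈ A, H.mult v e

def vsA (A : Finset H.E) (v : H.V) (x : H.E → ℤ) : ℤ := ∑ e ∈ A, (H.mult v e : ℤ) * x e

lemma sum_mult (e : H.E) : ∑ v, H.mult v e = 2 := by
  unfold mult
  rw [Finset.sum_add_distrib]
  simp [Finset.sum_ite_eq]

lemma dA_erase {A : Finset H.E} {e : H.E} (he : e ∈ A) (v : H.V) :
    dA H A v = H.mult v e + dA H (A.erase e) v := by
  exact (Finset.add_sum_erase A _ he).symm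

lemma vsA_erase {A : Finset H.E} {e : H.E} (he : e ∈ A) (v : H.V) (x : H.E → ℤ) :
    vsA H A v x = (H.mult v e : ℤ) * x e + vsA H (A.erase e) v x := by
  exact (Finset.add_sum_erase A _ he).symm

lemma mult_pos_iff (v : H.V) (e : H.E) : H.mult v e ≠ 0 ↔ (H.fst e = v ∨ H.snd e = v) := by
  unfold mult
  by_cases h1 : H.fst e = v <;> by_cases h2 : H.snd e = v <;> simp [h1, h2]

/-- a vertex not incident to any edge of `A` is isolated in `Quot (relA A)`. -/
lemma isolated_class {A : Finset H.E} {w : H.V}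
    (hw : ∀ e ∈ A, H.fst e ≠ w ∧ H.snd e ≠ w) {z z' : H.V}
    (h : Relation.EqvGen (relA H.fst H.snd A) z z') : (z = w ↔ z' = w) := by
  induction h with
  | rel x y hxy =>
    obtain ⟨e, he, hor⟩ := hxy
    constructor
    · rintro rfl
      rcases hor with ⟨h1, -⟩ | ⟨-, h2⟩
      · exact absurd h1 (hw e he).1
      · exact absurd h2 (hw e he).2
    · rintro rfl
      rcases hor with ⟨-, h2⟩ | ⟨h1, -⟩
      · exact absurd h2 (hw e he).2
      · exact absurd h1 (hw e he).1
  | refl x => exact Iff.rfl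
  | symm x y _ ih => exact ih.symm
  | trans x y z _ _ ih1 ih2 => exact ih1.trans ih2


lemma mult_le_two (v : H.V) (e : H.E) : H.mult v e ≤ 2 := by
  unfold mult
  by_cases h1 : H.fst e = v <;> by_cases h2 : H.snd e = v <;> simp [h1, h2]

lemma mult_eq_two_iff (v : H.V) (e : H.E) : H.mult v e = 2 ↔ (H.fst e = v ∧ H.snd e = v) := by
  unfold mult
  by_cases h1 : H.fst e = v <;> by_cases h2 : H.snd e = v <;> simp [h1, h2]

lemma mult_one_cases {v : H.V} {e : H.E} (h : H.mult v e = 1) :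
    (H.fst e = v ∧ H.snd e ≠ v) ∨ (H.fst e ≠ v ∧ H.snd e = v) := by
  unfold mult at h
  by_cases h1 : H.fst e = v <;> by_cases h2 : H.snd e = v <;> simp [h1, h2] at h ⊢

lemma mult_eq_zero {v : H.V} {e : H.E} (h1 : H.fst e ≠ v) (h2 : H.snd e ≠ v) :
    H.mult v e = 0 := by
  unfold mult; simp [h1, h2]

lemma mult_one_of_other {v w : H.V} {e : H.E} (hvw : w ≠ v)
    (h : (H.fst e = v ∧ H.snd e = w) ∨ (H.fst e = w ∧ H.snd e = v)) : H.mult w e = 1 := by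
  unfold mult
  rcases h with ⟨h1, h2⟩ | ⟨h1, h2⟩
  · rw [if_neg (fun hh : H.fst e = w => hvw (hh ▸ h1.symm).symm), if_pos h2]
  · rw [if_pos h1, if_neg (fun hh : H.snd e = w => hvw (hh ▸ h2.symm).symm)]

/-- Main forest decomposition lemma. -/
theorem forest_decomp (A : Finset H.E) : ∀ (d : ℕ) (x : H.E → ℤ),
    (∀ v, dA H A v = 0 ∨ dA H A v = 1 ∨ dA H A v = 3) →
    (∀ e ∈ A, 0 ≤ x e) → (∀ e ∈ A, x e ≤ (d : ℤ)) →
    (∀ v, dA H A v = 3 → Even (vsA H A v x) ∧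
      (∀ e ∈ A, H.mult v e ≠ 0 → 2 * x e ≤ vsA H A v x) ∧ vsA H A v x ≤ 2 * d) →
    (bA H.fst H.snd A ≤ 0) →
    ∃ u : Fin d → H.E → ℤ,
      (∀ e ∈ A, (∑ i, u i e) = x e) ∧
      (∀ i e, 0 ≤ u i e ∧ u i e ≤ 1) ∧
      (∀ i e, e ∉ A → u i e = 0) ∧
      (∀ i v, dA H A v = 3 → Even (vsA H A v (u i)) ∧ vsA H A v (u i) ≤ 2) := by
  induction A using Finset.strongInduction with
  | _ A ih =>
  intro d x htri hx0 hcap hcone hbetti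
  by_cases hI : ∃ v, dA H A v = 3
  case neg =>
    -- no inner vertex: all edges bare; split values arbitrarily
    refine ⟨fun i e => if e ∈ A ∧ (i : ℕ) < (x e).toNat then 1 else 0, ?_, ?_, ?_, ?_⟩
    · intro e he
      have hxe0 := hx0 e he
      have hxed := hcap e he
      have : (∑ i : Fin d, if e ∈ A ∧ (i : ℕ) < (x e).toNat then (1:ℤ) else 0)
          = ∑ i : Fin d, if (i : ℕ) < (x e).toNat then (1:ℤ) else 0 := by
        apply Finset.sum_congr rfl
        intro i _
        simp [he]
      rw [this, Fin.sum_univ_eq_sum_range (fun i => if i < (x e).toNat then (1:ℤ) else 0) d]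
      rw [← Finset.sum_filter]
      have hfilt : (Finset.range d).filter (fun i => i < (x e).toNat) = Finset.range (x e).toNat := by
        ext i
        simp only [Finset.mem_filter, Finset.mem_range]
        constructor
        · rintro ⟨-, h2⟩; exact h2
        · intro h
          refine ⟨lt_of_lt_of_le h ?_, h⟩
          omega
        
      rw [hfilt]
      simp only [Finset.sum_const, Finset.card_range, nsmul_eq_mul, mul_one]
      omega
    · intro i e
      simp only []
      constructor <;> split <;> norm_num
    · intro i e he; simp [he]
    · intro i v hv; exact absurd ⟨v, hv⟩ hI
  case pos =>
  obtain ⟨v₀, hv₀⟩ := hI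
  classical
  set I : Finset H.V := Finset.univ.filter (fun v => dA H A v = 3) with hIdef
  set AI : Finset H.E := A.filter (fun e => dA H A (H.fst e) = 3 ∧ dA H A (H.snd e) = 3) with hAIdef
  have hv₀I : v₀ ∈ I := by simp [hIdef, hv₀]
  -- Step 1 : |AI| < |I|
  have hAIsub : AI ⊆ A := Finset.filter_subset _ _
  have hbAI : bA H.fst H.snd AI ≤ 0 := le_trans (bA_mono H.fst H.snd A AI hAIsub) hbetti
  have hcAI : (Fintype.card H.V : ℤ) - I.card + 1 ≤ cA H.fst H.snd AI := by
    have hiso : ∀ w : H.V, w ∉ I → ∀ e ∈ AI, H.fst e ≠ w ∧ H.snd e ≠ w := by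
      intro w hw e he
      rw [hAIdef, Finset.mem_filter] at he
      constructor
      · intro h; apply hw; rw [hIdef]; simp only [Finset.mem_filter]
        exact ⟨Finset.mem_univ w, h ▸ he.2.1⟩
      · intro h; apply hw; rw [hIdef]; simp only [Finset.mem_filter]
        exact ⟨Finset.mem_univ w, h ▸ he.2.2⟩
    have hinj : Function.Injective
        (fun z : {w : H.V // w ∉ I} ⊕ Unit =>
          Sum.elim (fun w : {w : H.V // w ∉ I} => Quot.mk (relA H.fst H.snd AI) w.1)
            (fun _ => Quot.mk (relA H.fst H.snd AI) v₀) z) := by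
      rintro (⟨w, hw⟩ | ⟨⟩) (⟨w', hw'⟩ | ⟨⟩) h <;> simp only [Sum.elim_inl, Sum.elim_inr] at h
      · rw [Quot.eq] at h
        have := (isolated_class H (hiso w' hw') h).mpr rfl
        exact congrArg Sum.inl (Subtype.ext this)
      · rw [Quot.eq] at h
        have := (isolated_class H (hiso w hw) h).mp rfl
        exact absurd (this ▸ hv₀I) hw
      · rw [Quot.eq] at h
        have := (isolated_class H (hiso w' hw') h).mpr rfl
        exact absurd (this ▸ hv₀I) hw'
      · rfl
    haveI : Finite (Quot (relA H.fst H.snd AI)) := quotFinite H.fst H.snd AI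
    have hcard := Nat.card_le_card_of_injective _ hinj
    rw [Nat.card_sum] at hcard
    have h1 : Nat.card {w : H.V // w ∉ I} = Fintype.card H.V - I.card := by
      rw [Nat.card_eq_fintype_card, Fintype.card_subtype_compl]
      congr 1
      exact Fintype.card_coe I
    have hpu : Nat.card Unit = 1 := by simp
    rw [h1, hpu] at hcard
    have hIle : I.card ≤ Fintype.card H.V := by
      calc I.card ≤ Finset.univ.card := Finset.card_le_card (Finset.subset_univ I)
        _ = Fintype.card H.V := Finset.card_univ
    rw [cA]
    push_cast
    omega
  have hAIlt : (AI.card : ℤ) + 1 ≤ I.card := by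
    rw [bA] at hbAI
    omega
  -- Step 2 : find v* with at most one inner occurrence
  have hsum2 : ∑ v ∈ I, ∑ e ∈ AI, H.mult v e = 2 * AI.card := by
    rw [Finset.sum_comm]
    have : ∀ e ∈ AI, ∑ v ∈ I, H.mult v e = 2 := by
      intro e he
      have hend : H.fst e ∈ I ∧ H.snd e ∈ I := by
        rw [hAIdef, Finset.mem_filter] at he
        rw [hIdef]
        constructor <;> simp [he.2.1, he.2.2]
      rw [← sum_mult H e]
      apply Finset.sum_subset (Finset.subset_univ I)
      intro v _ hv
      unfold mult
      have h1 : H.fst e ≠ v := fun h => hv (h ▸ hend.1)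
      have h2 : H.snd e ≠ v := fun h => hv (h ▸ hend.2)
      simp [h1, h2]
    rw [Finset.sum_congr rfl this]
    simp [mul_comm]
  have hvstar : ∃ v ∈ I, ∑ e ∈ AI, H.mult v e ≤ 1 := by
    by_contra hcon
    push_neg at hcon
    have : 2 * I.card ≤ ∑ v ∈ I, ∑ e ∈ AI, H.mult v e := by
      calc 2 * I.card = ∑ _v ∈ I, 2 := by simp [mul_comm]
        _ ≤ _ := Finset.sum_le_sum (fun v hv => hcon v hv)
    rw [hsum2] at this
    omega
  obtain ⟨vs, hvsI, hvs1⟩ := hvstar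
  have hdvs : dA H A vs = 3 := by
    rw [hIdef, Finset.mem_filter] at hvsI; exact hvsI.2
  -- Step 3 : find the cherry at vs
  set B : Finset H.E :=
    A.filter (fun e => ¬(dA H A (H.fst e) = 3 ∧ dA H A (H.snd e) = 3)) with hBdef
  have hBsub : B ⊆ A := Finset.filter_subset _ _
  have hsplitAB : ∑ e ∈ AI, H.mult vs e + ∑ e ∈ B, H.mult vs e = dA H A vs :=
    Finset.sum_filter_add_sum_filter_not A _ _
  have hBsum : 2 ≤ ∑ e ∈ B, H.mult vs e := by omega
  have hmult1 : ∀ e ∈ B, H.mult vs e ≠ 0 → H.mult vs e = 1 := by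
    intro e heB hne
    have hle := mult_le_two H vs e
    rcases Nat.lt_or_ge (H.mult vs e) 2 with h | h
    · omega
    · exfalso
      have h2 : H.mult vs e = 2 := by omega
      rw [mult_eq_two_iff] at h2
      rw [hBdef, Finset.mem_filter] at heB
      exact heB.2 ⟨h2.1 ▸ hdvs, h2.2 ▸ hdvs⟩
  have hleaf : ∀ e ∈ B, H.mult vs e = 1 → ∃ ℓ, ℓ ≠ vs ∧ H.mult ℓ e = 1 ∧
      dA H A ℓ = 1 ∧ (∀ w, w ≠ vs → w ≠ ℓ → H.mult w e = 0) ∧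
      (∀ e' ∈ A, e' ≠ e → H.mult ℓ e' = 0) := by
    intro e heB hm1
    have heA : e ∈ A := hBsub heB
    have hnot : ¬(dA H A (H.fst e) = 3 ∧ dA H A (H.snd e) = 3) := by
      rw [hBdef, Finset.mem_filter] at heB; exact heB.2
    have main : ∀ ℓ : H.V, ℓ ≠ vs → H.mult ℓ e = 1 → dA H A ℓ ≠ 3 →
        (∀ w, w ≠ vs → w ≠ ℓ → H.mult w e = 0) →
        ∃ ℓ', ℓ' ≠ vs ∧ H.mult ℓ' e = 1 ∧ dA H A ℓ' = 1 ∧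
          (∀ w, w ≠ vs → w ≠ ℓ' → H.mult w e = 0) ∧
          (∀ e' ∈ A, e' ≠ e → H.mult ℓ' e' = 0) := by
      intro ℓ hℓvs hmℓ hd3 hw0
      have hd1 : dA H A ℓ = 1 := by
        have hge : 1 ≤ dA H A ℓ := by
          rw [dA_erase H heA ℓ, hmℓ]
          omega
        rcases htri ℓ with h | h | h <;> omega
      refine ⟨ℓ, hℓvs, hmℓ, hd1, hw0, ?_⟩
      intro e' he' hne'
      have hsplit := dA_erase H heA ℓ
      rw [hd1, hmℓ] at hsplit
      have hzero : dA H (A.erase e) ℓ = 0 := by omega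
      rw [dA, Finset.sum_eq_zero_iff] at hzero
      exact hzero e' (Finset.mem_erase.mpr ⟨hne', he'⟩)
    rcases mult_one_cases H hm1 with ⟨hf, hs⟩ | ⟨hf, hs⟩
    · refine main (H.snd e) hs ?_ ?_ ?_
      · exact mult_one_of_other H hs (Or.inl ⟨hf, rfl⟩)
      · intro h3; exact hnot ⟨hf ▸ hdvs, h3⟩
      · intro w hwvs hwl
        exact mult_eq_zero H (fun h => hwvs (h.symm.trans hf)) (fun h => hwl h.symm)
    · refine main (H.fst e) hf ?_ ?_ ?_
      · exact mult_one_of_other H hf (Or.inr ⟨rfl, hs⟩)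
      · intro h3; exact hnot ⟨h3, hs ▸ hdvs⟩
      · intro w hwvs hwl
        exact mult_eq_zero H (fun h => hwl h.symm) (fun h => hwvs (h.symm.trans hs))
  -- pick e₁ and e₂
  have hBne : ∑ e ∈ B, H.mult vs e ≠ 0 := by omega
  obtain ⟨e₁, he₁B, he₁ne⟩ := Finset.exists_ne_zero_of_sum_ne_zero hBne
  have hm₁ : H.mult vs e₁ = 1 := hmult1 e₁ he₁B he₁ne
  have hBrest : ∑ e ∈ B.erase e₁, H.mult vs e ≠ 0 := by
    have := Finset.add_sum_erase B (H.mult vs) he₁B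
    omega
  obtain ⟨e₂, he₂B', he₂ne⟩ := Finset.exists_ne_zero_of_sum_ne_zero hBrest
  have he₂₁ : e₂ ≠ e₁ := (Finset.mem_erase.mp he₂B').1
  have he₂B : e₂ ∈ B := (Finset.mem_erase.mp he₂B').2
  have hm₂ : H.mult vs e₂ = 1 := hmult1 e₂ he₂B he₂ne
  obtain ⟨ℓ₁, hℓ₁vs, hmℓ₁, hdℓ₁, hw₁, honly₁⟩ := hleaf e₁ he₁B hm₁
  obtain ⟨ℓ₂, hℓ₂vs, hmℓ₂, hdℓ₂, hw₂, honly₂⟩ := hleaf e₂ he₂B hm₂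
  have he₁A : e₁ ∈ A := hBsub he₁B
  have he₂A : e₂ ∈ A := hBsub he₂B
  have hℓ₁₂ : ℓ₁ ≠ ℓ₂ := by
    intro h
    have := honly₁ e₂ he₂A he₂₁.symm.symm
    rw [h] at this
    rw [this] at hmℓ₂
    exact absurd hmℓ₂ (by omega)
  -- the reduced edge set
  set A' : Finset H.E := (A.erase e₁).erase e₂ with hA'def
  have he₂e : e₂ ∈ A.erase e₁ := Finset.mem_erase.mpr ⟨he₂₁, he₂A⟩
  have hA'sub : A' ⊆ A := (Finset.erase_subset _ _).trans (Finset.erase_subset _ _)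
  have he₁A' : e₁ ∉ A' := by
    rw [hA'def]
    intro h
    exact (Finset.mem_erase.mp ((Finset.mem_erase.mp h).2)).1 rfl
  have he₂A' : e₂ ∉ A' := fun h => (Finset.mem_erase.mp h).1 rfl
  have hssub : A' ⊂ A := Finset.ssubset_iff_of_subset hA'sub |>.mpr ⟨e₁, he₁A, he₁A'⟩
  have hmemA' : ∀ e ∈ A, e ≠ e₁ → e ≠ e₂ → e ∈ A' := by
    intro e he h1 h2
    exact Finset.mem_erase.mpr ⟨h2, Finset.mem_erase.mpr ⟨h1, he⟩⟩
  have hdsplit : ∀ v, dA H A v = H.mult v e₁ + (H.mult v e₂ + dA H A' v) := by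
    intro v
    rw [dA_erase H he₁A v, dA_erase H he₂e v]
  have hvsplit : ∀ v y, vsA H A v y =
      (H.mult v e₁ : ℤ) * y e₁ + ((H.mult v e₂ : ℤ) * y e₂ + vsA H A' v y) := by
    intro v y
    rw [vsA_erase H he₁A v y, vsA_erase H he₂e v y]
  have hdA'vs : dA H A' vs = 1 := by
    have := hdsplit vs
    rw [hdvs, hm₁, hm₂] at this
    omega
  -- the third edge f at vs
  have hfex : ∑ e ∈ A', H.mult vs e ≠ 0 := by
    have h := hdA'vs
    rw [dA] at h
    omega
  obtain ⟨f, hfA', hfne⟩ := Finset.exists_ne_zero_of_sum_ne_zero hfex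
  have hfsplit := dA_erase H hfA' vs
  rw [hdA'vs] at hfsplit
  have hmf : H.mult vs f = 1 := by omega
  have hfonly : ∀ e ∈ A', e ≠ f → H.mult vs e = 0 := by
    have hzero : dA H (A'.erase f) vs = 0 := by omega
    rw [dA, Finset.sum_eq_zero_iff] at hzero
    intro e he hne
    exact hzero e (Finset.mem_erase.mpr ⟨hne, he⟩)
  have hfA : f ∈ A := hA'sub hfA'
  have hfe₁ : f ≠ e₁ := fun h => he₁A' (h ▸ hfA')
  have hfe₂ : f ≠ e₂ := fun h => he₂A' (h ▸ hfA')
  -- properties of ℓ₁, ℓ₂ w.r.t. A'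
  have hdA'ℓ₁ : dA H A' ℓ₁ = 0 := by
    have := hdsplit ℓ₁
    rw [hdℓ₁, hmℓ₁] at this
    omega
  have hdA'ℓ₂ : dA H A' ℓ₂ = 0 := by
    have := hdsplit ℓ₂
    rw [hdℓ₂, hmℓ₂] at this
    omega
  -- hypotheses for the induction
  have hdA'eq : ∀ v, v ≠ vs → v ≠ ℓ₁ → v ≠ ℓ₂ → dA H A' v = dA H A v := by
    intro v h1 h2 h3
    have := hdsplit v
    rw [hw₁ v h1 h2, hw₂ v h1 h3] at this
    omega
  have htri' : ∀ v, dA H A' v = 0 ∨ dA H A' v = 1 ∨ dA H A' v = 3 := by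
    intro v
    by_cases h1 : v = vs
    · rw [h1, hdA'vs]; right; left; rfl
    by_cases h2 : v = ℓ₁
    · rw [h2, hdA'ℓ₁]; left; rfl
    by_cases h3 : v = ℓ₂
    · rw [h3, hdA'ℓ₂]; left; rfl
    · rw [hdA'eq v h1 h2 h3]; exact htri v
  have hA'3 : ∀ v, dA H A' v = 3 → (v ≠ vs ∧ v ≠ ℓ₁ ∧ v ≠ ℓ₂) ∧ dA H A v = 3 := by
    intro v hv
    have h1 : v ≠ vs := fun h => by rw [h, hdA'vs] at hv; omega
    have h2 : v ≠ ℓ₁ := fun h => by rw [h, hdA'ℓ₁] at hv; omega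
    have h3 : v ≠ ℓ₂ := fun h => by rw [h, hdA'ℓ₂] at hv; omega
    exact ⟨⟨h1, h2, h3⟩, (hdA'eq v h1 h2 h3) ▸ hv⟩
  have hvsA'eq : ∀ v, v ≠ vs → v ≠ ℓ₁ → v ≠ ℓ₂ → ∀ y, vsA H A' v y = vsA H A v y := by
    intro v h1 h2 h3 y
    have := hvsplit v y
    rw [hw₁ v h1 h2, hw₂ v h1 h3] at this
    push_cast at this
    omega
  have hcone' : ∀ v, dA H A' v = 3 → Even (vsA H A' v x) ∧
      (∀ e ∈ A', H.mult v e ≠ 0 → 2 * x e ≤ vsA H A' v x) ∧ vsA H A' v x ≤ 2 * d := by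
    intro v hv
    obtain ⟨⟨h1, h2, h3⟩, hv3⟩ := hA'3 v hv
    rw [hvsA'eq v h1 h2 h3 x]
    obtain ⟨hev, htriv, hbd⟩ := hcone v hv3
    exact ⟨hev, fun e he hm => htriv e (hA'sub he) hm, hbd⟩
  obtain ⟨u', hsum', hbnd', hoff', hnet'⟩ := ih A' hssub d x htri'
    (fun e he => hx0 e (hA'sub he)) (fun e he => hcap e (hA'sub he)) hcone'
    (le_trans (bA_mono H.fst H.snd A A' hA'sub) hbetti)
  -- the numbers
  set a := x e₁ with hadef
  set b := x e₂ with hbdef2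
  set cc := x f with hccdef
  have hvsA'vsx : vsA H A' vs x = cc := by
    rw [vsA_erase H hfA' vs x, hmf]
    have hz : vsA H (A'.erase f) vs x = 0 := by
      show ∑ e ∈ A'.erase f, (H.mult vs e : ℤ) * x e = 0
      apply Finset.sum_eq_zero
      intro e he
      rw [hfonly e (Finset.mem_erase.mp he).2 (Finset.mem_erase.mp he).1]
      simp
    rw [hz]
    simp [hccdef]
  have hvsAvsx : vsA H A vs x = a + (b + cc) := by
    rw [hvsplit vs x, hm₁, hm₂, hvsA'vsx]
    push_cast
    ring
  obtain ⟨hev, htrivs, hbdvs⟩ := hcone vs hdvs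
  obtain ⟨k, hk⟩ := hev
  rw [hvsAvsx] at hk hbdvs
  have h2a : 2 * a ≤ a + (b + cc) := by
    have := htrivs e₁ he₁A (by rw [hm₁]; omega)
    rw [hvsAvsx] at this
    exact this
  have h2b : 2 * b ≤ a + (b + cc) := by
    have := htrivs e₂ he₂A (by rw [hm₂]; omega)
    rw [hvsAvsx] at this
    exact this
  have h2cc : 2 * cc ≤ a + (b + cc) := by
    have := htrivs f hfA (by rw [hmf]; omega)
    rw [hvsAvsx] at this
    exact this
  have ha0 : 0 ≤ a := hx0 e₁ he₁A
  have hb0 : 0 ≤ b := hx0 e₂ he₂A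
  have hcc0 : 0 ≤ cc := hx0 f hfA
  -- the index sets
  set R1 : Finset (Fin d) := Finset.univ.filter (fun i => u' i f = 1) with hR1def
  set R0 : Finset (Fin d) := Finset.univ.filter (fun i => ¬ u' i f = 1) with hR0def
  have hr01 : ∀ i, u' i f = 0 ∨ u' i f = 1 := by
    intro i
    have := hbnd' i f
    omega
  have hsumf : ∑ i, u' i f = cc := hsum' f hfA'
  have hR1card : (R1.card : ℤ) = cc := by
    rw [← hsumf]
    rw [hR1def, ← Finset.sum_boole]
    apply Finset.sum_congr rfl
    intro i _
    rcases hr01 i with h | h <;> simp [h]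
  have hR1R0 : R1.card + R0.card = d := by
    rw [hR1def, hR0def]
    rw [Finset.card_filter_add_card_filter_not]
    simp
  set xZ : ℤ := k - b with hxZdef
  set yZ : ℤ := k - cc with hyZdef
  have hxZ0 : 0 ≤ xZ := by omega
  have hxZc : xZ ≤ cc := by omega
  have hyZ0 : 0 ≤ yZ := by omega
  have hyZd : yZ ≤ (d : ℤ) - cc := by omega
  obtain ⟨K, hKsub, hKcard⟩ := Finset.exists_subset_card_eq
    (show xZ.toNat ≤ R1.card by omega)
  obtain ⟨Y, hYsub, hYcard⟩ := Finset.exists_subset_card_eq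
    (show yZ.toNat ≤ R0.card by omega)
  have hdisjR : ∀ i, i ∈ R1 → i ∉ R0 := by
    intro i h1 h0
    rw [hR1def, Finset.mem_filter] at h1
    rw [hR0def, Finset.mem_filter] at h0
    exact h0.2 h1.2
  have hYnotR1 : ∀ i, i ∈ Y → i ∉ R1 := fun i hi h1 => hdisjR i h1 (hYsub hi)
  have hKR1 : ∀ i, i ∈ K → i ∈ R1 := fun i hi => hKsub hi
  -- the extension
  set p : Fin d → ℤ := fun i => if i ∈ K ∪ Y then 1 else 0 with hpdef
  set q : Fin d → ℤ := fun i => if i ∈ (R1 \ K) ∪ Y then 1 else 0 with hqdef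
  refine ⟨fun i e => if e = e₁ then p i else if e = e₂ then q i else u' i e, ?_, ?_, ?_, ?_⟩
  · -- sums
    intro e he
    by_cases h1 : e = e₁
    · subst h1
      have : ∀ i : Fin d, (if e = e then p i else if e = e₂ then q i else u' i e) = p i := by
        intro i; rw [if_pos rfl]
      rw [Finset.sum_congr rfl (fun i _ => this i)]
      rw [hpdef]
      rw [Finset.sum_boole]
      have hdisj : Disjoint K Y := by
        rw [Finset.disjoint_left]
        intro i hiK hiY
        exact hYnotR1 i hiY (hKR1 i hiK)
      rw [Finset.filter_mem_eq_inter, Finset.univ_inter, Finset.card_union_of_disjoint hdisj,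
        hKcard, hYcard]
      push_cast
      omega
    by_cases h2 : e = e₂
    · subst h2
      have : ∀ i : Fin d, (if e = e₁ then p i else if e = e then q i else u' i e) = q i := by
        intro i; rw [if_neg h1, if_pos rfl]
      rw [Finset.sum_congr rfl (fun i _ => this i)]
      rw [hqdef]
      rw [Finset.sum_boole]
      have hdisj : Disjoint (R1 \ K) Y := by
        rw [Finset.disjoint_left]
        intro i hiK hiY
        exact hYnotR1 i hiY (Finset.mem_sdiff.mp hiK).1
      rw [Finset.filter_mem_eq_inter, Finset.univ_inter, Finset.card_union_of_disjoint hdisj,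
        Finset.card_sdiff_of_subset (fun i hi => hKR1 i hi), hKcard, hYcard]
      have hKle : K.card ≤ R1.card := Finset.card_le_card (fun i hi => hKR1 i hi)
      push_cast [hKcard ▸ hKle]
      omega
    · have : ∀ i : Fin d, (if e = e₁ then p i else if e = e₂ then q i else u' i e) = u' i e := by
        intro i; rw [if_neg h1, if_neg h2]
      rw [Finset.sum_congr rfl (fun i _ => this i)]
      exact hsum' e (hmemA' e he h1 h2)
  · -- bounds
    intro i e
    dsimp only
    split_ifs with h1 h2
    · rw [hpdef]; dsimp only; split_ifs <;> omega
    · rw [hqdef]; dsimp only; split_ifs <;> omega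
    · exact hbnd' i e
  · -- off A
    intro i e he
    dsimp only
    rw [if_neg (fun h : e = e₁ => he (by rw [h]; exact he₁A)),
      if_neg (fun h : e = e₂ => he (by rw [h]; exact he₂A))]
    exact hoff' i e (fun h => he (hA'sub h))
  · -- network conditions
    intro i v hv3
    beta_reduce
    have hueq : ∀ e ∈ A', (if e = e₁ then p i else if e = e₂ then q i else u' i e) = u' i e := by
      intro e he
      rw [if_neg (fun h : e = e₁ => he₁A' (by rw [← h]; exact he)),
        if_neg (fun h : e = e₂ => he₂A' (by rw [← h]; exact he))]
    have hvsA'u : vsA H A' v (fun e => if e = e₁ then p i else if e = e₂ then q i else u' i e)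
        = vsA H A' v (u' i) := by
      apply Finset.sum_congr rfl
      intro e he
      beta_reduce
      rw [hueq e he]
    by_cases hvvs : v = vs
    · subst hvvs
      rw [hvsplit v _]
      beta_reduce
      rw [hvsA'u]
      have hval : vsA H A' v (u' i) = u' i f := by
        rw [vsA_erase H hfA' v (u' i), hmf]
        have hz : vsA H (A'.erase f) v (u' i) = 0 := by
          show ∑ e ∈ A'.erase f, (H.mult v e : ℤ) * u' i e = 0
          apply Finset.sum_eq_zero
          intro e he
          rw [hfonly e (Finset.mem_erase.mp he).2 (Finset.mem_erase.mp he).1]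
          simp
        rw [hz]
        simp
      rw [hval, hm₁, hm₂]
      rw [if_pos rfl, if_neg (fun h : e₂ = e₁ => he₂₁ h)]
      rw [if_pos rfl]
      push_cast
      rw [hpdef, hqdef]
      beta_reduce
      by_cases hiR1 : i ∈ R1
      · have hif : u' i f = 1 := by
          rw [hR1def, Finset.mem_filter] at hiR1; exact hiR1.2
        have hiY : i ∉ Y := fun h => hYnotR1 i h hiR1
        by_cases hiK : i ∈ K
        · have h1 : i ∈ K ∪ Y := Finset.mem_union_left _ hiK
          have h2 : i ∉ (R1 \ K) ∪ Y := by
            intro h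
            rcases Finset.mem_union.mp h with h | h
            · exact (Finset.mem_sdiff.mp h).2 hiK
            · exact hiY h
          rw [if_pos h1, if_neg h2, hif]
          constructor
          · exact ⟨1, by ring⟩
          · omega
        · have h1 : i ∉ K ∪ Y := by
            intro h
            rcases Finset.mem_union.mp h with h | h
            · exact hiK h
            · exact hiY h
          have h2 : i ∈ (R1 \ K) ∪ Y :=
            Finset.mem_union_left _ (Finset.mem_sdiff.mpr ⟨hiR1, hiK⟩)
          rw [if_neg h1, if_pos h2, hif]
          constructor
          · exact ⟨1, by ring⟩
          · omega
      · have hif : u' i f = 0 := by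
          rcases hr01 i with h | h
          · exact h
          · exact absurd (by rw [hR1def, Finset.mem_filter]; exact ⟨Finset.mem_univ i, h⟩) hiR1
        have hiK : i ∉ K := fun h => hiR1 (hKR1 i h)
        have hiRK : i ∉ R1 \ K := fun h => hiR1 (Finset.mem_sdiff.mp h).1
        by_cases hiY : i ∈ Y
        · rw [if_pos (Finset.mem_union_right _ hiY), if_pos (Finset.mem_union_right _ hiY), hif]
          constructor
          · exact ⟨1, by ring⟩
          · omega
        · rw [if_neg ?_, if_neg ?_, hif]
          constructor
          · exact ⟨0, by ring⟩
          · omega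
          · intro h
            rcases Finset.mem_union.mp h with h | h
            · exact hiRK h
            · exact hiY h
          · intro h
            rcases Finset.mem_union.mp h with h | h
            · exact hiK h
            · exact hiY h
    · have h2 : v ≠ ℓ₁ := by
        intro h
        rw [h, hdℓ₁] at hv3
        omega
      have h3 : v ≠ ℓ₂ := by
        intro h
        rw [h, hdℓ₂] at hv3
        omega
      have hdA'v : dA H A' v = 3 := by rw [hdA'eq v hvvs h2 h3]; exact hv3
      have := hnet' i v hdA'v
      beta_reduce
      rw [← hvsA'eq v hvvs h2 h3, hvsA'u]
      exact this


end TGraph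

namespace TGraph

section Cut

variable (G : TGraph) (e₀ : G.E)

noncomputable def cut : TGraph where
  V := G.V ⊕ Bool
  E := G.E ⊕ Unit
  fintV := inferInstance
  fintE := inferInstance
  decV := inferInstance
  decE := inferInstance
  fst := Sum.elim (fun e => Sum.inl (G.fst e)) (fun _ => Sum.inr false)
  snd := Sum.elim (fun e => if e = e₀ then Sum.inr true else Sum.inl (G.snd e))
    (fun _ => Sum.inl (G.snd e₀))

lemma cut_mult_key (v : G.V) (e : G.E) :
    (cut G e₀).mult (Sum.inl v) (Sum.inl e) +
      (if e = e₀ ∧ G.snd e₀ = v then 1 else 0) = G.mult v e := by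
  unfold mult cut
  by_cases he : e = e₀
  · subst he
    by_cases hs : G.snd e = v <;> simp [hs]
  · simp [he]

lemma cut_mult_inl_inr (v : G.V) :
    (cut G e₀).mult (Sum.inl v) (Sum.inr ()) = if G.snd e₀ = v then 1 else 0 := by
  unfold mult cut
  by_cases hs : G.snd e₀ = v <;> simp [hs]

lemma cut_mult_inr_true_inl (e : G.E) :
    (cut G e₀).mult (Sum.inr true) (Sum.inl e) = if e = e₀ then 1 else 0 := by
  unfold mult cut
  by_cases he : e = e₀ <;> simp [he]

lemma cut_mult_inr_true_inr :
    (cut G e₀).mult (Sum.inr true) (Sum.inr ()) = 0 := by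
  unfold mult cut
  simp

lemma cut_mult_inr_false_inl (e : G.E) :
    (cut G e₀).mult (Sum.inr false) (Sum.inl e) = 0 := by
  unfold mult cut
  by_cases he : e = e₀ <;> simp [he]

lemma cut_mult_inr_false_inr :
    (cut G e₀).mult (Sum.inr false) (Sum.inr ()) = 1 := by
  unfold mult cut
  simp

lemma cut_dA_inl (v : G.V) :
    dA (cut G e₀) Finset.univ (Sum.inl v) = G.degree v := by
  unfold dA degree
  show ∑ x : G.E ⊕ Unit, (cut G e₀).mult (Sum.inl v) x = ∑ e : G.E, G.mult v e
  rw [Fintype.sum_sum_type (fun x => (cut G e₀).mult (Sum.inl v) x)]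
  have h1 : ∑ e : G.E, (cut G e₀).mult (Sum.inl v) (Sum.inl e) +
      (if G.snd e₀ = v then 1 else 0) = ∑ e, G.mult v e := by
    have : ∀ e : G.E, G.mult v e = (cut G e₀).mult (Sum.inl v) (Sum.inl e) +
        (if e = e₀ ∧ G.snd e₀ = v then 1 else 0) := fun e => (cut_mult_key G e₀ v e).symm
    rw [Finset.sum_congr rfl (fun e _ => this e), Finset.sum_add_distrib]
    congr 1
    rw [Finset.sum_congr rfl (fun e _ => by rw [ite_and] : ∀ e ∈ Finset.univ,
      (if e = e₀ ∧ G.snd e₀ = v then 1 else 0) =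
        if e = e₀ then (if G.snd e₀ = v then 1 else 0) else 0)]
    rw [Finset.sum_ite_eq' Finset.univ e₀ (fun _ => if G.snd e₀ = v then 1 else 0)]
    simp
  have h2 : ∑ x : Unit, (cut G e₀).mult (Sum.inl v) (Sum.inr x) =
      (if G.snd e₀ = v then 1 else 0) := by
    rw [Fintype.sum_unique]
    simp [cut_mult_inl_inr]
  omega

lemma cut_dA_inr_true :
    dA (cut G e₀) Finset.univ (Sum.inr true) = 1 := by
  unfold dA
  show ∑ x : G.E ⊕ Unit, (cut G e₀).mult (Sum.inr true) x = 1
  rw [Fintype.sum_sum_type (fun x => (cut G e₀).mult (Sum.inr true) x)]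
  have h1 : ∑ e : G.E, (cut G e₀).mult (Sum.inr true) (Sum.inl e) = 1 := by
    rw [Finset.sum_congr rfl (fun e _ => cut_mult_inr_true_inl G e₀ e)]
    rw [Finset.sum_ite_eq' Finset.univ e₀ (fun _ => 1)]
    simp
  have h2 : ∑ x : Unit, (cut G e₀).mult (Sum.inr true) (Sum.inr x) = 0 := by
    rw [Fintype.sum_unique]
    simp [cut_mult_inr_true_inr]
  omega

lemma cut_dA_inr_false :
    dA (cut G e₀) Finset.univ (Sum.inr false) = 1 := by
  unfold dA
  show ∑ x : G.E ⊕ Unit, (cut G e₀).mult (Sum.inr false) x = 1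
  rw [Fintype.sum_sum_type (fun x => (cut G e₀).mult (Sum.inr false) x)]
  have h1 : ∑ e : G.E, (cut G e₀).mult (Sum.inr false) (Sum.inl e) = 0 := by
    rw [Finset.sum_congr rfl (fun e _ => cut_mult_inr_false_inl G e₀ e)]
    simp
  have h2 : ∑ x : Unit, (cut G e₀).mult (Sum.inr false) (Sum.inr x) = 1 := by
    rw [Fintype.sum_unique]
    simp [cut_mult_inr_false_inr]
  omega

lemma cut_vsA_inl (v : G.V) (y : (cut G e₀).E → ℤ) :
    vsA (cut G e₀) Finset.univ (Sum.inl v) y =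
      G.vsum v (fun e => y (Sum.inl e)) +
        (if G.snd e₀ = v then 1 else 0) * (y (Sum.inr ()) - y (Sum.inl e₀)) := by
  unfold vsA vsum
  show ∑ x : G.E ⊕ Unit, ((cut G e₀).mult (Sum.inl v) x : ℤ) * y x = _
  rw [Fintype.sum_sum_type (fun x => ((cut G e₀).mult (Sum.inl v) x : ℤ) * y x)]
  have key : ∀ e : G.E, ((cut G e₀).mult (Sum.inl v) (Sum.inl e) : ℤ) * y (Sum.inl e) =
      (G.mult v e : ℤ) * y (Sum.inl e) -
        (if e = e₀ then (if G.snd e₀ = v then (1:ℤ) else 0) * y (Sum.inl e) else 0) := by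
    intro e
    have h4 := cut_mult_key G e₀ v e
    by_cases hc : e = e₀ ∧ G.snd e₀ = v
    · rw [if_pos hc.1, if_pos hc.2, if_pos hc] at *
      have : ((cut G e₀).mult (Sum.inl v) (Sum.inl e) : ℤ) = (G.mult v e : ℤ) - 1 := by
        omega
      rw [this]
      ring
    · rw [if_neg hc] at h4
      have hz : (if e = e₀ then (if G.snd e₀ = v then (1:ℤ) else 0) * y (Sum.inl e) else 0)
          = 0 := by
        by_cases h1 : e = e₀
        · have h2 : ¬ G.snd e₀ = v := fun h => hc ⟨h1, h⟩
          rw [if_pos h1, if_neg h2]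
          ring
        · rw [if_neg h1]
      rw [hz]
      have : ((cut G e₀).mult (Sum.inl v) (Sum.inl e) : ℤ) = (G.mult v e : ℤ) := by omega
      rw [this]
      ring
  rw [Finset.sum_congr rfl (fun e _ => key e), Finset.sum_sub_distrib]
  rw [Finset.sum_ite_eq' Finset.univ e₀
    (fun e => (if G.snd e₀ = v then (1:ℤ) else 0) * y (Sum.inl e))]
  have h2 : ∑ x : Unit, ((cut G e₀).mult (Sum.inl v) (Sum.inr x) : ℤ) * y (Sum.inr x) =
      (if G.snd e₀ = v then (1:ℤ) else 0) * y (Sum.inr ()) := by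
    rw [Fintype.sum_unique]
    have := cut_mult_inl_inr G e₀ v
    rw [show ∀ x : Unit, Sum.inr (β := Unit) x = (Sum.inr () : G.E ⊕ Unit) from fun x => rfl]
    by_cases hs : G.snd e₀ = v <;> simp [this, hs]
  rw [h2]
  simp only [Finset.mem_univ, if_pos]
  by_cases hs : G.snd e₀ = v <;> simp [hs] <;> ring

lemma cut_fst_inl (e : G.E) : (cut G e₀).fst (Sum.inl e) = Sum.inl (G.fst e) := rfl

lemma cut_snd_inl_ne (e : G.E) (he : e ≠ e₀) :
    (cut G e₀).snd (Sum.inl e) = Sum.inl (G.snd e) := by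
  show (if e = e₀ then Sum.inr true else Sum.inl (G.snd e)) = _
  rw [if_neg he]

lemma cut_snd_inl_self : (cut G e₀).snd (Sum.inl e₀) = Sum.inr true := by
  show (if e₀ = e₀ then Sum.inr true else Sum.inl (G.snd e₀)) = _
  rw [if_pos rfl]

lemma cut_fst_inr : (cut G e₀).fst (Sum.inr ()) = Sum.inr false := rfl

lemma cut_snd_inr : (cut G e₀).snd (Sum.inr ()) = Sum.inl (G.snd e₀) := rfl

/-- the quotient of the cut graph agrees with the quotient after deleting `e₀`. -/
lemma cut_cA : cA (cut G e₀).fst (cut G e₀).snd Finset.univ =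
    cA G.fst G.snd (Finset.univ.erase e₀) := by
  classical
  set r2 := relA (cut G e₀).fst (cut G e₀).snd (Finset.univ : Finset (cut G e₀).E) with hr2
  set r1 := relA G.fst G.snd (Finset.univ.erase e₀) with hr1
  set π : (cut G e₀).V → G.V := Sum.elim id (fun b => cond b (G.fst e₀) (G.snd e₀)) with hπ
  have hresp2 : ∀ w w', r2 w w' → Quot.mk r1 (π w) = Quot.mk r1 (π w') := by
    rintro w w' ⟨ε, -, hor⟩
    have hcase : Quot.mk r1 (π ((cut G e₀).fst ε)) = Quot.mk r1 (π ((cut G e₀).snd ε)) := by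
      rcases ε with e | u
      · by_cases he : e = e₀
        · subst he
          rw [cut_fst_inl, cut_snd_inl_self]
          rfl
        · rw [cut_fst_inl, cut_snd_inl_ne G e₀ e he]
          apply Quot.sound
          exact ⟨e, Finset.mem_erase.mpr ⟨he, Finset.mem_univ e⟩, Or.inl ⟨rfl, rfl⟩⟩
      · rw [cut_fst_inr, cut_snd_inr]
        rfl
    rcases hor with ⟨h1, h2⟩ | ⟨h1, h2⟩
    · rw [← h1, ← h2]; exact hcase
    · rw [← h1, ← h2]; exact hcase.symm
  have hresp1 : ∀ v v', r1 v v' → Quot.mk r2 (Sum.inl v) = Quot.mk r2 (Sum.inl v') := by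
    rintro v v' ⟨e, he, hor⟩
    have hne : e ≠ e₀ := (Finset.mem_erase.mp he).1
    apply Quot.sound
    rcases hor with ⟨h1, h2⟩ | ⟨h1, h2⟩
    · exact ⟨Sum.inl e, Finset.mem_univ _,
        Or.inl ⟨by rw [cut_fst_inl, h1], by rw [cut_snd_inl_ne G e₀ e hne, h2]⟩⟩
    · exact ⟨Sum.inl e, Finset.mem_univ _,
        Or.inr ⟨by rw [cut_fst_inl, h1], by rw [cut_snd_inl_ne G e₀ e hne, h2]⟩⟩
  have hequiv : Quot r2 ≃ Quot r1 := by
    refine ⟨Quot.lift (fun w => Quot.mk r1 (π w)) hresp2,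
      Quot.lift (fun v => Quot.mk r2 (Sum.inl v)) hresp1, ?_, ?_⟩
    · intro c
      induction c using Quot.ind with
      | _ w =>
        rcases w with v | b
        · rfl
        · rcases b with _ | _
          · -- false
            show Quot.mk r2 (Sum.inl (G.snd e₀)) = Quot.mk r2 (Sum.inr false)
            apply Quot.sound
            exact ⟨Sum.inr (), Finset.mem_univ _, Or.inr ⟨rfl, rfl⟩⟩
          · -- true
            show Quot.mk r2 (Sum.inl (G.fst e₀)) = Quot.mk r2 (Sum.inr true)
            apply Quot.sound
            exact ⟨Sum.inl e₀, Finset.mem_univ _,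
              Or.inl ⟨rfl, cut_snd_inl_self G e₀⟩⟩
    · intro c
      induction c using Quot.ind with
      | _ v => rfl
  exact Nat.card_congr hequiv

end Cut

end TGraph

namespace TGraph

lemma derived_triangle (H : TGraph) (A : Finset H.E) (v : H.V) (y : H.E → ℤ)
    (hy : ∀ e, 0 ≤ y e ∧ y e ≤ 1) (hev : Even (vsA H A v y)) (hle : vsA H A v y ≤ 2) :
    ∀ e ∈ A, H.mult v e ≠ 0 → 2 * y e ≤ vsA H A v y := by
  intro e heA hm
  have h0 : ∀ e' ∈ A, 0 ≤ (H.mult v e' : ℤ) * y e' := by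
    intro e' _
    exact mul_nonneg (by positivity) (hy e').1
  have hvs0 : 0 ≤ vsA H A v y := Finset.sum_nonneg h0
  obtain ⟨k, hk⟩ := hev
  have h02 : vsA H A v y = 0 ∨ vsA H A v y = 2 := by omega
  rcases h02 with h | h
  · have hterm : (H.mult v e : ℤ) * y e = 0 := by
      have := (Finset.sum_eq_zero_iff_of_nonneg h0).mp h e heA
      exact this
    have hy0 : y e = 0 := by
      rcases mul_eq_zero.mp hterm with h' | h'
      · exact absurd (Nat.cast_eq_zero.mp h') hm
      · exact h'
    rw [hy0, h]
    norm_num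
  · rw [h]
    have := (hy e).2
    omega

lemma vsum_add (H : TGraph) (v : H.V) (y z : H.E → ℤ) :
    H.vsum v (fun e => y e + z e) = H.vsum v y + H.vsum v z := by
  unfold vsum
  rw [← Finset.sum_add_distrib]
  apply Finset.sum_congr rfl
  intro e _
  ring

lemma piece_in_cone (H : TGraph) (hH : H.Trivalent) (u : H.E → ℤ)
    (h1 : ∀ e, 0 ≤ u e ∧ u e ≤ 1)
    (h2 : ∀ v, dA H Finset.univ v = 3 → Even (vsA H Finset.univ v u) ∧ vsA H Finset.univ v u ≤ 2) :
    H.InCone (1, u) := by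
  refine ⟨by norm_num, fun e => (h1 e).1, fun v hv => ?_⟩
  have hd3 : dA H Finset.univ v = 3 := by
    rcases hH v with h | h
    · exact absurd h hv
    · exact h
  obtain ⟨hev, hle⟩ := h2 v hd3
  have hvs : H.vsum v u = vsA H Finset.univ v u := rfl
  refine ⟨hvs ▸ hev, ?_, ?_⟩
  · intro e hm
    rw [hvs]
    exact derived_triangle H Finset.univ v u h1 hev hle e (Finset.mem_univ e) hm
  · rw [hvs]
    omega

end TGraph

/-- For a trivalent graph with first Betti number at most one, the
graded semigroup `τ(G)` is generated by its elements of degree 1 and 2. (We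
assume each edge has at least one inner endpoint, as is the case for graphs
assembled from tripods.) -/
theorem cone_generated_in_degrees_one_and_two (G : TGraph) (hG : G.Trivalent)
    (hE : ∀ e, ¬ G.IsLeaf (G.fst e) ∨ ¬ G.IsLeaf (G.snd e))
    (hg : G.betti ≤ 1) (ω : ℤ × (G.E → ℤ)) (hω : G.InCone ω) :
    ω ∈ AddSubmonoid.closure
      {ω' : ℤ × (G.E → ℤ) | G.InCone ω' ∧ (ω'.1 = 1 ∨ ω'.1 = 2)} := by
  classical
  obtain ⟨hd0, hx0, hconeG⟩ := hω
  -- translations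
  have hcomp : G.components = cA G.fst G.snd Finset.univ := by
    unfold TGraph.components cA relA
    have hrel : (fun v w : G.V =>
        ∃ e, (G.fst e = v ∧ G.snd e = w) ∨ (G.fst e = w ∧ G.snd e = v)) =
        (fun v w : G.V => ∃ e ∈ Finset.univ,
          (G.fst e = v ∧ G.snd e = w) ∨ (G.fst e = w ∧ G.snd e = v)) := by
      funext v w
      apply propext
      constructor
      · rintro ⟨e, h⟩; exact ⟨e, Finset.mem_univ e, h⟩
      · rintro ⟨e, -, h⟩; exact ⟨e, h⟩
    rw [hrel]
  have hbetti_eq : G.betti = bA G.fst G.snd Finset.univ := by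
    unfold TGraph.betti bA
    rw [hcomp, Finset.card_univ]
    ring
  have hinner3 : ∀ v, ¬ G.IsLeaf v ↔ TGraph.dA G Finset.univ v = 3 := by
    intro v
    have hdeg : G.degree v = TGraph.dA G Finset.univ v := rfl
    unfold TGraph.IsLeaf
    rcases hG v with h | h <;> rw [← hdeg, h] <;> constructor <;> omega
  have hvsum_eq : ∀ v y, G.vsum v y = TGraph.vsA G Finset.univ v y := fun _ _ => rfl
  set d : ℕ := ω.1.toNat with hddef
  have hd : (d : ℤ) = ω.1 := Int.toNat_of_nonneg hd0
  have hcap : ∀ e, ω.2 e ≤ (d : ℤ) := by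
    intro e
    have hend : ∃ v, ¬ G.IsLeaf v ∧ G.mult v e ≠ 0 := by
      rcases hE e with h | h
      · exact ⟨G.fst e, h, (G.mult_pos_iff _ e).mpr (Or.inl rfl)⟩
      · exact ⟨G.snd e, h, (G.mult_pos_iff _ e).mpr (Or.inr rfl)⟩
    obtain ⟨v, hv, hm⟩ := hend
    obtain ⟨-, htriv, hbd⟩ := hconeG v hv
    have := htriv e hm
    omega
  have htriA : ∀ v, TGraph.dA G Finset.univ v = 0 ∨ TGraph.dA G Finset.univ v = 1 ∨
      TGraph.dA G Finset.univ v = 3 := by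
    intro v
    have hdeg : G.degree v = TGraph.dA G Finset.univ v := rfl
    rcases hG v with h | h
    · right; left; omega
    · right; right; omega
  have hconeA : ∀ v, TGraph.dA G Finset.univ v = 3 →
      Even (TGraph.vsA G Finset.univ v ω.2) ∧
      (∀ e ∈ Finset.univ, G.mult v e ≠ 0 →
        2 * ω.2 e ≤ TGraph.vsA G Finset.univ v ω.2) ∧
      TGraph.vsA G Finset.univ v ω.2 ≤ 2 * (d : ℤ) := by
    intro v hv
    obtain ⟨hev, htriv, hbd⟩ := hconeG v ((hinner3 v).mpr hv)
    rw [hvsum_eq] at hev htriv hbd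
    exact ⟨hev, fun e _ hm => htriv e hm, by omega⟩
  have hbnn := bA_nonneg G.fst G.snd (Finset.univ : Finset G.E)
  have hb01 : bA G.fst G.snd (Finset.univ : Finset G.E) = 0 ∨
      bA G.fst G.snd (Finset.univ : Finset G.E) = 1 := by
    rw [hbetti_eq] at hg
    omega
  rcases hb01 with hb0 | hb1
  · -- forest case
    obtain ⟨u, hsum, hbnd, -, hnet⟩ := TGraph.forest_decomp G Finset.univ d ω.2 htriA
      (fun e _ => hx0 e) (fun e _ => hcap e) hconeA (le_of_eq hb0)
    have hω_eq : ω = ∑ i : Fin d, ((1 : ℤ), u i) := by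
      apply Prod.ext
      · rw [Prod.fst_sum]
        simp [hd]
      · rw [Prod.snd_sum]
        funext e
        rw [Finset.sum_apply]
        exact (hsum e (Finset.mem_univ e)).symm
    rw [hω_eq]
    apply AddSubmonoid.sum_mem
    intro i _
    apply AddSubmonoid.subset_closure
    refine ⟨TGraph.piece_in_cone G hG (u i) (fun e => hbnd i e) (fun v hv => hnet i v hv), Or.inl rfl⟩
  · -- betti = 1 case
    obtain ⟨e₀, -, hnb⟩ := exists_nonbridge G.fst G.snd Finset.univ (by omega)
    set G2 := G.cut e₀ with hG2
    set x2 : G2.E → ℤ := Sum.elim ω.2 (fun _ => ω.2 e₀) with hx2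
    have htri2 : ∀ w, TGraph.dA G2 Finset.univ w = 0 ∨ TGraph.dA G2 Finset.univ w = 1 ∨
        TGraph.dA G2 Finset.univ w = 3 := by
      rintro (v | b)
      · rw [TGraph.cut_dA_inl]
        rcases hG v with h | h
        · right; left; exact h
        · right; right; exact h
      · rcases b with _ | _
        · rw [TGraph.cut_dA_inr_false]; right; left; rfl
        · rw [TGraph.cut_dA_inr_true]; right; left; rfl
    have hx02 : ∀ ε ∈ (Finset.univ : Finset G2.E), 0 ≤ x2 ε := by
      rintro (e | u) -
      · exact hx0 e
      · exact hx0 e₀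
    have hcap2 : ∀ ε ∈ (Finset.univ : Finset G2.E), x2 ε ≤ (d : ℤ) := by
      rintro (e | u) -
      · exact hcap e
      · exact hcap e₀
    have hvv : ∀ v, TGraph.vsA G2 Finset.univ (Sum.inl v) x2 = G.vsum v ω.2 := by
      intro v
      rw [TGraph.cut_vsA_inl]
      have h1 : (fun e => x2 (Sum.inl e)) = ω.2 := rfl
      have h2 : x2 (Sum.inr ()) - x2 (Sum.inl e₀) = 0 := by
        show ω.2 e₀ - ω.2 e₀ = 0
        ring
      rw [h1, h2]
      ring
    have hcone2 : ∀ w, TGraph.dA G2 Finset.univ w = 3 →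
        Even (TGraph.vsA G2 Finset.univ w x2) ∧
        (∀ ε ∈ (Finset.univ : Finset G2.E), G2.mult w ε ≠ 0 →
          2 * x2 ε ≤ TGraph.vsA G2 Finset.univ w x2) ∧
        TGraph.vsA G2 Finset.univ w x2 ≤ 2 * (d : ℤ) := by
      rintro (v | b) hw
      · rw [TGraph.cut_dA_inl] at hw
        have hvin : ¬ G.IsLeaf v := by unfold TGraph.IsLeaf; omega
        obtain ⟨hev, htriv, hbd⟩ := hconeG v hvin
        refine ⟨by rw [hvv]; exact hev, ?_, by rw [hvv]; omega⟩
        rintro (e | u) - hm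
        · have hkey : G2.mult (Sum.inl v) (Sum.inl e) +
              (if e = e₀ ∧ G.snd e₀ = v then 1 else 0) = G.mult v e :=
            TGraph.cut_mult_key G e₀ v e
          have hmG : G.mult v e ≠ 0 := by omega
          have := htriv e hmG
          rw [hvv]
          exact this
        · have hsnd : G.snd e₀ = v := by
            have hmm := TGraph.cut_mult_inl_inr G e₀ v
            by_cases h : G.snd e₀ = v
            · exact h
            · rw [if_neg h] at hmm
              have : Sum.inr (β := Unit) u = (Sum.inr () : G.E ⊕ Unit) := rfl
              rw [this] at hm
              exact absurd hmm hm
          have hmG : G.mult v e₀ ≠ 0 := (G.mult_pos_iff v e₀).mpr (Or.inr hsnd)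
          have := htriv e₀ hmG
          rw [hvv]
          exact this
      · exfalso
        rcases b with _ | _
        · rw [TGraph.cut_dA_inr_false] at hw; omega
        · rw [TGraph.cut_dA_inr_true] at hw; omega
    have hbetti2 : bA G2.fst G2.snd Finset.univ ≤ 0 := by
      rw [bA, TGraph.cut_cA, hnb]
      have hcV : Fintype.card G2.V = Fintype.card G.V + 2 := by
        have h1 : Fintype.card G2.V = Fintype.card (G.V ⊕ Bool) :=
          Fintype.card_congr (Equiv.refl _)
        rw [h1, Fintype.card_sum, Fintype.card_bool]
      have hcE : (Finset.univ : Finset G2.E).card = Fintype.card G.E + 1 := by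
        rw [Finset.card_univ]
        have h1 : Fintype.card G2.E = Fintype.card (G.E ⊕ Unit) :=
          Fintype.card_congr (Equiv.refl _)
        rw [h1, Fintype.card_sum]
        simp
      rw [bA, Finset.card_univ] at hb1
      rw [hcV, hcE]
      omega
    obtain ⟨u2, hsum2, hbnd2, -, hnet2⟩ := TGraph.forest_decomp G2 Finset.univ d x2 htri2
      hx02 hcap2 hcone2 hbetti2
    have h01 : ∀ i (ε : G2.E), u2 i ε = 0 ∨ u2 i ε = 1 := by
      intro i ε
      have := hbnd2 i ε
      omega
    have hsumS : ∑ i, u2 i (Sum.inl e₀) = ω.2 e₀ := hsum2 (Sum.inl e₀) (Finset.mem_univ _)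
    have hsumT : ∑ i, u2 i (Sum.inr ()) = ω.2 e₀ := hsum2 (Sum.inr ()) (Finset.mem_univ _)
    set P := Finset.univ.filter
      (fun i : Fin d => u2 i (Sum.inl e₀) = 1 ∧ u2 i (Sum.inr ()) = 0) with hPdef
    set M := Finset.univ.filter
      (fun i : Fin d => u2 i (Sum.inl e₀) = 0 ∧ u2 i (Sum.inr ()) = 1) with hMdef
    set Q := Finset.univ.filter
      (fun i : Fin d => u2 i (Sum.inl e₀) = u2 i (Sum.inr ())) with hQdef
    have hPM : P.card = M.card := by
      have h1 : ∑ i : Fin d, (u2 i (Sum.inl e₀) - u2 i (Sum.inr ())) = 0 := by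
        rw [Finset.sum_sub_distrib, hsumS, hsumT]
        ring
      have h2 : ∀ i : Fin d, u2 i (Sum.inl e₀) - u2 i (Sum.inr ()) =
          (if i ∈ P then (1:ℤ) else 0) - (if i ∈ M then (1:ℤ) else 0) := by
        intro i
        have hP' : i ∈ P ↔ (u2 i (Sum.inl e₀) = 1 ∧ u2 i (Sum.inr ()) = 0) := by
          rw [hPdef]; simp
        have hM' : i ∈ M ↔ (u2 i (Sum.inl e₀) = 0 ∧ u2 i (Sum.inr ()) = 1) := by
          rw [hMdef]; simp
        have hs := h01 i (Sum.inl e₀)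
        have ht := h01 i (Sum.inr ())
        simp only [hP', hM']
        split_ifs with ha hb hb <;> omega
      rw [Finset.sum_congr rfl (fun i _ => h2 i), Finset.sum_sub_distrib,
        Finset.sum_boole, Finset.sum_boole, Finset.filter_mem_eq_inter,
        Finset.filter_mem_eq_inter, Finset.univ_inter, Finset.univ_inter] at h1
      have := sub_eq_zero.mp h1
      exact_mod_cast this
    have hQc : Q = (P ∪ M)ᶜ := by
      ext i
      have hP' : i ∈ P ↔ (u2 i (Sum.inl e₀) = 1 ∧ u2 i (Sum.inr ()) = 0) := by
        rw [hPdef]; simp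
      have hM' : i ∈ M ↔ (u2 i (Sum.inl e₀) = 0 ∧ u2 i (Sum.inr ()) = 1) := by
        rw [hMdef]; simp
      have hQ' : i ∈ Q ↔ u2 i (Sum.inl e₀) = u2 i (Sum.inr ()) := by
        rw [hQdef]; simp
      rw [Finset.mem_compl, Finset.mem_union, hQ', hP', hM']
      have hs := h01 i (Sum.inl e₀)
      have ht := h01 i (Sum.inr ())
      omega
    have hPMdisj : Disjoint P M := by
      rw [Finset.disjoint_left]
      intro i hiP hiM
      rw [hPdef, Finset.mem_filter] at hiP
      rw [hMdef, Finset.mem_filter] at hiM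
      omega
    have hQdisj : Disjoint Q (P ∪ M) := by
      rw [hQc]
      exact disjoint_compl_left
    have hQPMunion : Q ∪ (P ∪ M) = Finset.univ := by
      rw [hQc]
      ext i
      simp only [Finset.mem_union, Finset.mem_compl, Finset.mem_univ, iff_true]
      tauto
    have hcards : Q.card + (P.card + M.card) = d := by
      have h1 := Finset.card_union_of_disjoint hQdisj
      have h2 := Finset.card_union_of_disjoint hPMdisj
      rw [hQPMunion, h2] at h1
      rw [← h1]
      simp [Finset.card_univ]
    set β := Finset.equivOfCardEq hPM with hβdef
    -- the degree-one and degree-two pieces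
    set g : Fin d → ℤ × (G.E → ℤ) := fun i => ((1:ℤ), fun e => u2 i (Sum.inl e)) with hgdef
    set h2p : {x // x ∈ P} → ℤ × (G.E → ℤ) := fun j =>
      ((2:ℤ), fun e => u2 j.1 (Sum.inl e) + u2 (β j).1 (Sum.inl e)) with hpdef2
    have hPmem : ∀ j : {x // x ∈ P}, u2 j.1 (Sum.inl e₀) = 1 ∧ u2 j.1 (Sum.inr ()) = 0 := by
      intro j
      exact (Finset.mem_filter.mp j.2).2
    have hMmem : ∀ j : {x // x ∈ M}, u2 j.1 (Sum.inl e₀) = 0 ∧ u2 j.1 (Sum.inr ()) = 1 := by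
      intro j
      exact (Finset.mem_filter.mp j.2).2
    have hd3iff : ∀ v, ¬ G.IsLeaf v → TGraph.dA G2 Finset.univ (Sum.inl v) = 3 := by
      intro v hv
      rw [TGraph.cut_dA_inl]
      rcases hG v with h | h
      · exact absurd h hv
      · exact h
    have hvsum_piece : ∀ i (v : G.V), G.vsum v (fun e => u2 i (Sum.inl e)) =
        TGraph.vsA G2 Finset.univ (Sum.inl v) (u2 i) -
          (if G.snd e₀ = v then (1:ℤ) else 0) * (u2 i (Sum.inr ()) - u2 i (Sum.inl e₀)) := by
      intro i v
      rw [TGraph.cut_vsA_inl]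
      ring
    -- the decomposition
    have hω_eq : ω = (∑ i ∈ Q, g i) + (∑ j : {x // x ∈ P}, h2p j) := by
      apply Prod.ext
      · rw [Prod.fst_add, Prod.fst_sum, Prod.fst_sum]
        have hq : ∑ i ∈ Q, (g i).1 = (Q.card : ℤ) := by
          rw [hgdef]; simp
        have hp : ∑ j : {x // x ∈ P}, (h2p j).1 = 2 * (P.card : ℤ) := by
          rw [hpdef2]
          simp [Finset.card_univ, Fintype.card_coe]
          ring
        rw [hq, hp]
        rw [← hd]
        push_cast
        omega
      · rw [Prod.snd_add, Prod.snd_sum, Prod.snd_sum]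
        funext e
        rw [Pi.add_apply, Finset.sum_apply, Finset.sum_apply]
        have hsplit2 : ∀ j : {x // x ∈ P}, (h2p j).2 e =
            u2 j.1 (Sum.inl e) + u2 (β j).1 (Sum.inl e) := fun j => rfl
        rw [Finset.sum_congr rfl (fun j _ => hsplit2 j), Finset.sum_add_distrib]
        have hβsum : ∑ j : {x // x ∈ P}, u2 (β j).1 (Sum.inl e) =
            ∑ i ∈ M, u2 i (Sum.inl e) := by
          rw [Equiv.sum_comp β (fun y : {x // x ∈ M} => u2 y.1 (Sum.inl e))]
          exact Finset.sum_coe_sort M (fun i => u2 i (Sum.inl e))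
        have hPsum : ∑ j : {x // x ∈ P}, u2 j.1 (Sum.inl e) =
            ∑ i ∈ P, u2 i (Sum.inl e) :=
          Finset.sum_coe_sort P (fun i => u2 i (Sum.inl e))
        have hgval : ∀ i ∈ Q, (g i).2 e = u2 i (Sum.inl e) := fun i _ => rfl
        rw [Finset.sum_congr rfl hgval, hβsum, hPsum]
        have htot : ∑ i ∈ Q, u2 i (Sum.inl e) +
            (∑ i ∈ P, u2 i (Sum.inl e) + ∑ i ∈ M, u2 i (Sum.inl e)) =
            ∑ i : Fin d, u2 i (Sum.inl e) := by
          rw [← Finset.sum_union hPMdisj, ← Finset.sum_union hQdisj, hQPMunion]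
        rw [htot]
        exact (hsum2 (Sum.inl e) (Finset.mem_univ _)).symm
    rw [hω_eq]
    apply AddSubmonoid.add_mem
    · apply AddSubmonoid.sum_mem
      intro i hiQ
      apply AddSubmonoid.subset_closure
      have hst : u2 i (Sum.inl e₀) = u2 i (Sum.inr ()) := by
        rw [hQdef, Finset.mem_filter] at hiQ
        exact hiQ.2
      refine ⟨TGraph.piece_in_cone G hG _ (fun e => hbnd2 i (Sum.inl e)) ?_, Or.inl rfl⟩
      intro v hv3
      have hd2 : TGraph.dA G2 Finset.univ (Sum.inl v) = 3 := by
        rw [TGraph.cut_dA_inl]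
        show G.degree v = 3
        exact hv3
      obtain ⟨hev, hle⟩ := hnet2 i (Sum.inl v) hd2
      have heq : TGraph.vsA G Finset.univ v (fun e => u2 i (Sum.inl e)) =
          TGraph.vsA G2 Finset.univ (Sum.inl v) (u2 i) := by
        have := hvsum_piece i v
        rw [hst] at this
        simp only [sub_self, mul_zero, sub_zero] at this
        exact this
      rw [heq]
      exact ⟨hev, hle⟩
    · apply AddSubmonoid.sum_mem
      intro j _
      apply AddSubmonoid.subset_closure
      obtain ⟨hsj1, hsj2⟩ := hPmem j
      obtain ⟨hbj1, hbj2⟩ := hMmem (β j)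
      refine ⟨⟨by norm_num, ?_, ?_⟩, Or.inr rfl⟩
      · intro e
        have h1 := hbnd2 j.1 (Sum.inl e)
        have h2 := hbnd2 (β j).1 (Sum.inl e)
        show 0 ≤ u2 j.1 (Sum.inl e) + u2 (β j).1 (Sum.inl e)
        omega
      · intro v hv
        have hd2 : TGraph.dA G2 Finset.univ (Sum.inl v) = 3 := hd3iff v hv
        obtain ⟨hevj, hlej⟩ := hnet2 j.1 (Sum.inl v) hd2
        obtain ⟨hevb, hleb⟩ := hnet2 (β j).1 (Sum.inl v) hd2
        have hwsum : G.vsum v (h2p j).2 =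
            TGraph.vsA G2 Finset.univ (Sum.inl v) (u2 j.1) +
            TGraph.vsA G2 Finset.univ (Sum.inl v) (u2 (β j).1) := by
          have hadd : G.vsum v (h2p j).2 = G.vsum v (fun e => u2 j.1 (Sum.inl e)) +
              G.vsum v (fun e => u2 (β j).1 (Sum.inl e)) := by
            exact TGraph.vsum_add G v _ _
          rw [hadd, hvsum_piece j.1 v, hvsum_piece (β j).1 v, hsj1, hsj2, hbj1, hbj2]
          ring
        have htrij := TGraph.derived_triangle G2 Finset.univ (Sum.inl v) (u2 j.1)
          (fun ε => hbnd2 j.1 ε) hevj hlej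
        have htrib := TGraph.derived_triangle G2 Finset.univ (Sum.inl v) (u2 (β j).1)
          (fun ε => hbnd2 (β j).1 ε) hevb hleb
        refine ⟨?_, ?_, ?_⟩
        · rw [hwsum]
          exact hevj.add hevb
        · intro e hm
          have hwe : (h2p j).2 e = u2 j.1 (Sum.inl e) + u2 (β j).1 (Sum.inl e) := rfl
          rcases (G.mult_pos_iff v e).mp hm with hf | hsn
          · have hm2 : G2.mult (Sum.inl v) (Sum.inl e) ≠ 0 := by
              apply (G2.mult_pos_iff (Sum.inl v) (Sum.inl e)).mpr
              left
              rw [TGraph.cut_fst_inl, hf]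
            have t1 := htrij (Sum.inl e) (Finset.mem_univ _) hm2
            have t2 := htrib (Sum.inl e) (Finset.mem_univ _) hm2
            rw [hwsum, hwe]
            omega
          · by_cases he : e = e₀
            · subst he
              have hm2 : G2.mult (Sum.inl v) (Sum.inr ()) ≠ 0 := by
                rw [TGraph.cut_mult_inl_inr, if_pos hsn]
                omega
              have t1 := htrij (Sum.inr ()) (Finset.mem_univ _) hm2
              have t2 := htrib (Sum.inr ()) (Finset.mem_univ _) hm2
              rw [hwsum, hwe]
              omega
            · have hm2 : G2.mult (Sum.inl v) (Sum.inl e) ≠ 0 := by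
                apply (G2.mult_pos_iff (Sum.inl v) (Sum.inl e)).mpr
                right
                rw [TGraph.cut_snd_inl_ne G e₀ e he, hsn]
              have t1 := htrij (Sum.inl e) (Finset.mem_univ _) hm2
              have t2 := htrib (Sum.inl e) (Finset.mem_univ _) hm2
              rw [hwsum, hwe]
              omega
        · rw [hwsum]
          show _ ≤ 2 * (2:ℤ)
          omega
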